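/- The maximum coherent ergotropy at fixed mean energy E equals E - ε_min - E_min(E): max over ρ with Tr[ρH]=E of (E(ρ) - E(Δ(ρ))) = E - ε_min - E_min(E), where E_min(E) is the energy-constrained minimum ergotropy and Δ is the dephasing channel in the eigenbasis of H. -/

import Mathlib

open Matrix
open scoped BigOperators ComplexOrder

noncomputable def energy {d : ℕ} (H ρ : Matrix (Fin d) (Fin d) ℂ) : ℝ :=
  (Matrix.trace (ρ * H)).re

noncomputable def ergotropy {d : ℕ} (H ρ : Matrix (Fin d) (Fin d) ℂ) : ℝ :=
  energy H ρ - ⨅ U : Matrix.unitaryGroup (Fin d) ℂ,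
    energy H ((U : Matrix (Fin d) (Fin d) ℂ) * ρ * star (U : Matrix (Fin d) (Fin d) ℂ))

noncomputable def antiErgotropy {d : ℕ} (H ρ : Matrix (Fin d) (Fin d) ℂ) : ℝ :=
  (⨆ U : Matrix.unitaryGroup (Fin d) ℂ,
    energy H ((U : Matrix (Fin d) (Fin d) ℂ) * ρ * star (U : Matrix (Fin d) (Fin d) ℂ))) - energy H ρ

noncomputable def minErg {d : ℕ} (H : Matrix (Fin d) (Fin d) ℂ) (E : ℝ) : ℝ :=
  sInf {x : ℝ | ∃ ρ : Matrix (Fin d) (Fin d) ℂ,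
    ρ.PosSemidef ∧ ρ.trace = 1 ∧ energy H ρ = E ∧ ergotropy H ρ = x}

namespace MaxCohAux

set_option linter.unusedSectionVars false

variable {d : ℕ} [NeZero d]

/-! ### Energy basics -/

lemma energy_eq (eps : Fin d → ℝ) (ρ : Matrix (Fin d) (Fin d) ℂ) :
    energy (Matrix.diagonal fun i => (eps i : ℂ)) ρ = ∑ i, (ρ i i).re * eps i := by
  simp [energy, Matrix.trace, Matrix.diag, Matrix.mul_diagonal, Complex.mul_re]

lemma diag_entry_eq_re {ρ : Matrix (Fin d) (Fin d) ℂ} (h : ρ.PosSemidef) (i : Fin d) :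
    ρ i i = ((ρ i i).re : ℂ) := by
  have := congrFun (congrFun h.1 i) i
  rw [Matrix.conjTranspose_apply] at this
  have him : (ρ i i).im = 0 := by
    have := congrArg Complex.im this
    simp at this
    linarith
  exact (Complex.ext (by simp) (by simp [him])).symm

lemma diag_re_nonneg {ρ : Matrix (Fin d) (Fin d) ℂ} (h : ρ.PosSemidef) (i : Fin d) :
    0 ≤ (ρ i i).re := by
  have h2 := h.dotProduct_mulVec_nonneg (Pi.single i 1)
  have heq : star (Pi.single i 1 : Fin d → ℂ) ⬝ᵥ ρ.mulVec (Pi.single i 1) = ρ i i := by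
    rw [Matrix.mulVec_single]
    have hs : (star (Pi.single i 1 : Fin d → ℂ)) = Pi.single i 1 := by
      ext j; by_cases hj : j = i <;> simp [Pi.single_apply, hj]
    rw [hs, single_dotProduct]
    simp
  rw [heq] at h2
  exact (Complex.le_def.mp h2).1

lemma sum_diag_re_eq_one {ρ : Matrix (Fin d) (Fin d) ℂ} (h : ρ.trace = 1) :
    ∑ i, (ρ i i).re = 1 := by
  have := congrArg Complex.re h
  simpa [Matrix.trace, Matrix.diag] using this

lemma energy_ge (eps : Fin d → ℝ) {ρ : Matrix (Fin d) (Fin d) ℂ}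
    (hψ : ρ.PosSemidef) (ht : ρ.trace = 1) :
    (⨅ j, eps j) ≤ energy (Matrix.diagonal fun i => (eps i : ℂ)) ρ := by
  rw [energy_eq]
  have key : ∑ i, (ρ i i).re * (⨅ j, eps j) ≤ ∑ i, (ρ i i).re * eps i :=
    Finset.sum_le_sum fun i _ => mul_le_mul_of_nonneg_left
      (ciInf_le (Set.finite_range eps).bddBelow i) (diag_re_nonneg hψ i)
  calc (⨅ j, eps j) = ∑ i, (ρ i i).re * (⨅ j, eps j) := by
        rw [← Finset.sum_mul, sum_diag_re_eq_one ht, one_mul]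
    _ ≤ _ := key

/-! ### Passive energy -/

noncomputable def pas (eps : Fin d → ℝ) (ρ : Matrix (Fin d) (Fin d) ℂ) : ℝ :=
  ⨅ U : Matrix.unitaryGroup (Fin d) ℂ,
    energy (Matrix.diagonal fun i => (eps i : ℂ))
      ((U : Matrix (Fin d) (Fin d) ℂ) * ρ * star (U : Matrix (Fin d) (Fin d) ℂ))

lemma ergotropy_eq (eps : Fin d → ℝ) (ρ : Matrix (Fin d) (Fin d) ℂ) :
    ergotropy (Matrix.diagonal fun i => (eps i : ℂ)) ρ
      = energy (Matrix.diagonal fun i => (eps i : ℂ)) ρ - pas eps ρ := rfl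

lemma conj_psd {ρ : Matrix (Fin d) (Fin d) ℂ} (h : ρ.PosSemidef)
    (U : Matrix.unitaryGroup (Fin d) ℂ) :
    ((U : Matrix (Fin d) (Fin d) ℂ) * ρ * star (U : Matrix (Fin d) (Fin d) ℂ)).PosSemidef :=
  h.mul_mul_conjTranspose_same _

lemma conj_trace {ρ : Matrix (Fin d) (Fin d) ℂ} (h : ρ.trace = 1)
    (U : Matrix.unitaryGroup (Fin d) ℂ) :
    ((U : Matrix (Fin d) (Fin d) ℂ) * ρ * star (U : Matrix (Fin d) (Fin d) ℂ)).trace = 1 := by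
  rw [Matrix.trace_mul_cycle]
  have hU : star (U : Matrix (Fin d) (Fin d) ℂ) * (U : Matrix (Fin d) (Fin d) ℂ) = 1 := by
    have := U.2
    rw [Matrix.mem_unitaryGroup_iff'] at this
    exact this
  rw [hU, one_mul, h]

lemma bddBelow_conj_range (eps : Fin d → ℝ) {ρ : Matrix (Fin d) (Fin d) ℂ}
    (hψ : ρ.PosSemidef) (ht : ρ.trace = 1) :
    BddBelow (Set.range fun U : Matrix.unitaryGroup (Fin d) ℂ =>
      energy (Matrix.diagonal fun i => (eps i : ℂ))
        ((U : Matrix (Fin d) (Fin d) ℂ) * ρ * star (U : Matrix (Fin d) (Fin d) ℂ))) := by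
  refine ⟨⨅ j, eps j, ?_⟩
  rintro x ⟨U, rfl⟩
  exact energy_ge eps (conj_psd hψ U) (conj_trace ht U)

lemma pas_ge (eps : Fin d → ℝ) {ρ : Matrix (Fin d) (Fin d) ℂ}
    (hψ : ρ.PosSemidef) (ht : ρ.trace = 1) :
    (⨅ j, eps j) ≤ pas eps ρ :=
  le_ciInf fun U => energy_ge eps (conj_psd hψ U) (conj_trace ht U)

lemma pas_le_conj (eps : Fin d → ℝ) {ρ : Matrix (Fin d) (Fin d) ℂ}
    (hψ : ρ.PosSemidef) (ht : ρ.trace = 1) (U : Matrix.unitaryGroup (Fin d) ℂ) :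
    pas eps ρ ≤ energy (Matrix.diagonal fun i => (eps i : ℂ))
      ((U : Matrix (Fin d) (Fin d) ℂ) * ρ * star (U : Matrix (Fin d) (Fin d) ℂ)) :=
  ciInf_le (bddBelow_conj_range eps hψ ht) U

lemma pas_le_energy (eps : Fin d → ℝ) {ρ : Matrix (Fin d) (Fin d) ℂ}
    (hψ : ρ.PosSemidef) (ht : ρ.trace = 1) :
    pas eps ρ ≤ energy (Matrix.diagonal fun i => (eps i : ℂ)) ρ := by
  have := pas_le_conj eps hψ ht 1
  simpa using this


/-! ### Twirl -/

noncomputable def om (d : ℕ) : ℂ := Complex.exp (2 * ↑Real.pi * Complex.I / d)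

lemma om_prim : IsPrimitiveRoot (om d) d := Complex.isPrimitiveRoot_exp d (NeZero.ne d)

lemma om_ne_zero : om d ≠ 0 := Complex.exp_ne_zero _

lemma conj_om : (starRingEnd ℂ) (om d) = (om d)⁻¹ := by
  rw [om, ← Complex.exp_conj, ← Complex.exp_neg]
  congr 1
  simp only [map_div₀, _root_.map_mul, Complex.conj_I, Complex.conj_ofReal, map_ofNat,
    map_natCast]
  ring

lemma conj_om_pow (k : ℕ) : (starRingEnd ℂ) (om d ^ k) = (om d ^ k)⁻¹ := by
  rw [map_pow, conj_om, inv_pow]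

noncomputable def Zm (d : ℕ) (m : ℕ) : Matrix (Fin d) (Fin d) ℂ :=
  Matrix.diagonal fun j : Fin d => om d ^ ((j : ℕ) * m)

lemma Zm_mem (m : ℕ) : Zm d m ∈ Matrix.unitaryGroup (Fin d) ℂ := by
  rw [Matrix.mem_unitaryGroup_iff']
  rw [Zm, Matrix.star_eq_conjTranspose, Matrix.diagonal_conjTranspose,
    Matrix.diagonal_mul_diagonal]
  have hfun : ∀ i : Fin d, star (fun j : Fin d => om d ^ ((j:ℕ) * m)) i * om d ^ ((i:ℕ) * m)
      = (1 : ℂ) := by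
    intro i
    simp only [Pi.star_apply, RCLike.star_def]
    rw [conj_om_pow]
    exact inv_mul_cancel₀ (pow_ne_zero _ om_ne_zero)
  simp only [hfun]
  exact Matrix.diagonal_one

lemma twirl (σ : Matrix (Fin d) (Fin d) ℂ) :
    ∑ m ∈ Finset.range d, (Zm d m * σ * star (Zm d m))
      = (d : ℂ) • Matrix.diagonal (fun i => σ i i) := by
  ext j k
  rw [Matrix.sum_apply]
  have hent : ∀ m, (Zm d m * σ * star (Zm d m)) j k
      = (om d ^ (j:ℕ) * (om d ^ (k:ℕ))⁻¹) ^ m * σ j k := by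
    intro m
    rw [Zm, Matrix.star_eq_conjTranspose, Matrix.diagonal_conjTranspose,
      Matrix.mul_diagonal, Matrix.diagonal_mul]
    simp only [Pi.star_apply, RCLike.star_def]
    rw [conj_om_pow]
    rw [mul_pow, inv_pow, pow_mul, pow_mul]
    ring
  simp only [hent]
  rw [← Finset.sum_mul]
  set x : ℂ := om d ^ (j:ℕ) * (om d ^ (k:ℕ))⁻¹ with hx
  by_cases hjk : j = k
  · subst hjk
    have hx1 : x = 1 := mul_inv_cancel₀ (pow_ne_zero _ om_ne_zero)
    simp [hx1, Matrix.smul_apply, Matrix.diagonal_apply_eq, smul_eq_mul]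
  · have hx1 : x ≠ 1 := by
      intro h
      exact hjk (Fin.ext (om_prim.pow_inj j.isLt k.isLt
        ((mul_inv_eq_one₀ (pow_ne_zero _ om_ne_zero)).mp h)))
    have hxd : x ^ d = 1 := by
      rw [hx, mul_pow, inv_pow, pow_right_comm, om_prim.pow_eq_one,
        one_pow, pow_right_comm, om_prim.pow_eq_one, one_pow, inv_one, mul_one]
    rw [geom_sum_eq hx1, hxd]
    simp [Matrix.smul_apply, Matrix.diagonal_apply_ne _ hjk, hjk]

/-! ### Energy linearity -/

lemma energy_sum {ι : Type*} (H : Matrix (Fin d) (Fin d) ℂ) (s : Finset ι)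
    (f : ι → Matrix (Fin d) (Fin d) ℂ) :
    energy H (∑ m ∈ s, f m) = ∑ m ∈ s, energy H (f m) := by
  simp [energy, Finset.sum_mul, Matrix.trace_sum, Complex.re_sum]

lemma energy_nat_smul (H : Matrix (Fin d) (Fin d) ℂ) (ρ : Matrix (Fin d) (Fin d) ℂ) :
    energy H ((d : ℂ) • ρ) = (d : ℝ) * energy H ρ := by
  rw [energy, Matrix.smul_mul, Matrix.trace_smul, smul_eq_mul]
  rw [energy, Complex.mul_re]
  simp

/-! ### Dephasing increases passive energy -/

lemma pas_le_pas_deph (eps : Fin d → ℝ) {σ : Matrix (Fin d) (Fin d) ℂ}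
    (hσ : σ.PosSemidef) (ht : σ.trace = 1) :
    pas eps σ ≤ pas eps (Matrix.diagonal fun i => σ i i) := by
  apply le_ciInf
  intro U
  have hd0 : (0:ℝ) < (d:ℝ) := Nat.cast_pos.mpr (Nat.pos_of_ne_zero (NeZero.ne d))
  rw [← mul_le_mul_iff_right₀ hd0]
  have heq : (d:ℝ) * energy (Matrix.diagonal fun i => (eps i : ℂ))
      ((U : Matrix (Fin d) (Fin d) ℂ) * (Matrix.diagonal fun i => σ i i)
        * star (U : Matrix (Fin d) (Fin d) ℂ))
      = ∑ m ∈ Finset.range d, energy (Matrix.diagonal fun i => (eps i : ℂ))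
          (((U : Matrix (Fin d) (Fin d) ℂ) * Zm d m) * σ
            * star ((U : Matrix (Fin d) (Fin d) ℂ) * Zm d m)) := by
    rw [← energy_nat_smul, ← energy_sum]
    congr 1
    calc (d:ℂ) • ((U : Matrix (Fin d) (Fin d) ℂ) * (Matrix.diagonal fun i => σ i i)
            * star (U : Matrix (Fin d) (Fin d) ℂ))
        = (U : Matrix (Fin d) (Fin d) ℂ) * ((d:ℂ) • Matrix.diagonal fun i => σ i i)
            * star (U : Matrix (Fin d) (Fin d) ℂ) := by
          rw [Matrix.mul_smul, Matrix.smul_mul]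
      _ = (U : Matrix (Fin d) (Fin d) ℂ)
            * (∑ m ∈ Finset.range d, Zm d m * σ * star (Zm d m))
            * star (U : Matrix (Fin d) (Fin d) ℂ) := by rw [twirl]
      _ = ∑ m ∈ Finset.range d, ((U : Matrix (Fin d) (Fin d) ℂ) * Zm d m) * σ
            * star ((U : Matrix (Fin d) (Fin d) ℂ) * Zm d m) := by
          rw [Finset.mul_sum, Finset.sum_mul]
          refine Finset.sum_congr rfl fun m _ => ?_
          rw [Matrix.star_mul]
          simp only [mul_assoc]
  rw [heq]
  calc (d:ℝ) * pas eps σ = ∑ _m ∈ Finset.range d, pas eps σ := by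
        simp [Finset.sum_const, nsmul_eq_mul]
    _ ≤ _ := Finset.sum_le_sum fun m _ =>
        pas_le_conj eps hσ ht (U * ⟨Zm d m, Zm_mem m⟩)

/-! ### vecMulVec helpers -/

lemma mul_vecMulVec (A : Matrix (Fin d) (Fin d) ℂ) (a b : Fin d → ℂ) :
    A * Matrix.vecMulVec a b = Matrix.vecMulVec (A.mulVec a) b := by
  ext i j
  simp only [Matrix.mul_apply, Matrix.vecMulVec_apply, Matrix.mulVec, dotProduct,
    Finset.sum_mul]
  exact Finset.sum_congr rfl fun k _ => by ring

lemma vecMulVec_mul (a b : Fin d → ℂ) (B : Matrix (Fin d) (Fin d) ℂ) :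
    Matrix.vecMulVec a b * B = Matrix.vecMulVec a (Matrix.vecMul b B) := by
  ext i j
  simp only [Matrix.mul_apply, Matrix.vecMulVec_apply, Matrix.vecMul, dotProduct,
    Finset.mul_sum]
  exact Finset.sum_congr rfl fun k _ => by ring

lemma vecMulVec_mul_vecMulVec (a b c e : Fin d → ℂ) :
    Matrix.vecMulVec a b * Matrix.vecMulVec c e
      = (b ⬝ᵥ c) • Matrix.vecMulVec a e := by
  ext i j
  simp only [Matrix.mul_apply, Matrix.vecMulVec_apply, Matrix.smul_apply, dotProduct,
    smul_eq_mul, Finset.sum_mul]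
  exact Finset.sum_congr rfl fun k _ => by ring

lemma vecMulVec_mulVec (a b x : Fin d → ℂ) :
    (Matrix.vecMulVec a b).mulVec x = (b ⬝ᵥ x) • a := by
  funext j
  simp only [Matrix.mulVec, Matrix.vecMulVec_apply, dotProduct, Pi.smul_apply,
    smul_eq_mul, Finset.sum_mul]
  exact Finset.sum_congr rfl fun k _ => by ring

lemma vecMulVec_real_psd (ψr : Fin d → ℝ) :
    (Matrix.vecMulVec (fun k => (ψr k : ℂ)) (fun k => (ψr k : ℂ))).PosSemidef := by
  set ψ : Fin d → ℂ := fun k => (ψr k : ℂ) with hψ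
  refine Matrix.PosSemidef.of_dotProduct_mulVec_nonneg ?_ ?_
  · ext i j
    simp [Matrix.conjTranspose_apply, Matrix.vecMulVec_apply, hψ, mul_comm]
  · intro x
    rw [vecMulVec_mulVec, dotProduct_smul]
    have hsc : star x ⬝ᵥ ψ = star (ψ ⬝ᵥ x) := by
      simp only [dotProduct, star_sum, star_mul', Pi.star_apply]
      refine Finset.sum_congr rfl fun k _ => ?_
      simp [hψ, mul_comm]
    rw [smul_eq_mul, hsc]
    exact mul_star_self_nonneg _

/-! ### The optimal pure state -/

lemma pure_state (eps : Fin d → ℝ) {σ : Matrix (Fin d) (Fin d) ℂ}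
    (hσ : σ.PosSemidef) (ht : σ.trace = 1) :
    ∃ ρ : Matrix (Fin d) (Fin d) ℂ, ρ.PosSemidef ∧ ρ.trace = 1 ∧
      (∀ i, ρ i i = σ i i) ∧ pas eps ρ = ⨅ j, eps j := by
  classical
  have hdre : ∀ k, 0 ≤ (σ k k).re := diag_re_nonneg hσ
  have hsum : ∑ k, (σ k k).re = 1 := sum_diag_re_eq_one ht
  set ψr : Fin d → ℝ := fun k => Real.sqrt (σ k k).re with hψr
  have hψsq : ∀ k, ψr k ^ 2 = (σ k k).re := fun k => Real.sq_sqrt (hdre k)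
  have hψnn : ∀ k, 0 ≤ ψr k := fun k => Real.sqrt_nonneg _
  have hψsum : ∑ k, ψr k ^ 2 = 1 := by
    rw [Finset.sum_congr rfl fun k _ => hψsq k, hsum]
  set ψ : Fin d → ℂ := fun k => (ψr k : ℂ) with hψ
  set ρ : Matrix (Fin d) (Fin d) ℂ := Matrix.vecMulVec ψ ψ with hρ
  have hpsd : ρ.PosSemidef := vecMulVec_real_psd ψr
  have hdiag : ∀ i, ρ i i = σ i i := by
    intro i
    rw [hρ, Matrix.vecMulVec_apply, hψ]
    rw [diag_entry_eq_re hσ i]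
    rw [← Complex.ofReal_mul]
    norm_cast
    rw [← hψsq i]; ring
  have htr : ρ.trace = 1 := by
    rw [Matrix.trace]
    calc ∑ i, ρ.diag i = ∑ i, σ i i := Finset.sum_congr rfl fun i _ => hdiag i
      _ = 1 := ht
  refine ⟨ρ, hpsd, htr, hdiag, ?_⟩
  obtain ⟨i₀, hi₀⟩ := exists_eq_ciInf_of_finite (f := eps)
  refine le_antisymm ?_ (pas_ge eps hpsd htr)
  set s : ℝ := ψr i₀ with hsdef
  have hs1 : s ≤ 1 := by
    have hle : (σ i₀ i₀).re ≤ 1 := by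
      rw [← hsum]
      exact Finset.single_le_sum (fun k _ => hdre k) (Finset.mem_univ i₀)
    nlinarith [hψsq i₀, hψnn i₀]
  by_cases hcase : s = 1
  · -- ψ is already the ground state
    have hre1 : (σ i₀ i₀).re = 1 := by rw [← hψsq i₀, ← hsdef, hcase]; norm_num
    have hzero : ∀ k, k ≠ i₀ → (σ k k).re = 0 := by
      intro k hk
      have hsplit : (σ i₀ i₀).re + ∑ j ∈ Finset.univ.erase i₀, (σ j j).re = 1 := by
        rw [← hsum]
        exact Finset.add_sum_erase _ (fun j => (σ j j).re) (Finset.mem_univ i₀)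
      have hz : ∑ j ∈ Finset.univ.erase i₀, (σ j j).re = 0 := by
        rw [hre1] at hsplit; linarith
      have := (Finset.sum_eq_zero_iff_of_nonneg fun j _ => hdre j).mp hz
      exact this k (Finset.mem_erase.mpr ⟨hk, Finset.mem_univ k⟩)
    calc pas eps ρ ≤ energy (Matrix.diagonal fun i => (eps i : ℂ)) ρ :=
          pas_le_energy eps hpsd htr
      _ = ∑ i, (σ i i).re * eps i := by
          rw [energy_eq]
          exact Finset.sum_congr rfl fun i _ => by rw [hdiag i]
      _ = eps i₀ := by
          rw [Finset.sum_eq_single i₀ (fun b _ hb => by rw [hzero b hb]; ring)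
            (fun h => absurd (Finset.mem_univ i₀) h)]
          rw [hre1, one_mul]
      _ = ⨅ j, eps j := hi₀
  · have hslt : s < 1 := lt_of_le_of_ne hs1 hcase
    set vR : Fin d → ℝ := fun k => ψr k - (if k = i₀ then 1 else 0) with hvR
    set v : Fin d → ℂ := fun k => (vR k : ℂ) with hv
    set c : ℝ := 2 * (1 - s) with hcdef
    have hc0 : c ≠ 0 := by rw [hcdef]; nlinarith
    have hcsum : ∑ k, vR k * vR k = c := by
      have h1 : ∑ k, ψr k * (if k = i₀ then (1:ℝ) else 0) = s := by
        simp [mul_ite, Finset.sum_ite_eq', hsdef]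
      have h2 : ∑ k, (if k = i₀ then (1:ℝ) else 0) * (if k = i₀ then (1:ℝ) else 0) = 1 := by
        simp [ite_and, Finset.sum_ite_eq']
      have expand : ∀ k : Fin d, vR k * vR k
          = ψr k ^ 2 - 2 * (ψr k * (if k = i₀ then (1:ℝ) else 0))
            + (if k = i₀ then (1:ℝ) else 0) * (if k = i₀ then (1:ℝ) else 0) := by
        intro k; rw [hvR]; ring
      rw [Finset.sum_congr rfl fun k _ => expand k]
      rw [Finset.sum_add_distrib, Finset.sum_sub_distrib, hψsum, ← Finset.mul_sum, h1, h2,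
        hcdef]
      ring
    set T : ℂ := ((2 / c : ℝ) : ℂ) with hT
    set M : Matrix (Fin d) (Fin d) ℂ := Matrix.vecMulVec v v with hM
    set R : Matrix (Fin d) (Fin d) ℂ := 1 - T • M with hR
    have hMherm : Mᴴ = M := by
      ext i j
      simp [hM, Matrix.conjTranspose_apply, Matrix.vecMulVec_apply, hv, mul_comm]
    have hRstar : star R = R := by
      rw [Matrix.star_eq_conjTranspose, hR, Matrix.conjTranspose_sub,
        Matrix.conjTranspose_one, Matrix.conjTranspose_smul, hMherm]
      congr 1
      rw [hT, Complex.star_def, Complex.conj_ofReal]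
    have hvv : v ⬝ᵥ v = (c : ℂ) := by
      rw [dotProduct]
      push_cast [hv]
      exact_mod_cast congrArg (Complex.ofReal) hcsum
    have hMM : M * M = (c : ℂ) • M := by
      rw [hM, vecMulVec_mul_vecMulVec, hvv]
    have hRR : R * R = 1 := by
      have hexp : R * R = 1 - T • M - T • M + (T * T) • (M * M) := by
        rw [hR]
        simp only [sub_mul, mul_sub, one_mul, mul_one, Matrix.smul_mul, Matrix.mul_smul,
          smul_smul]
        abel
      rw [hexp, hMM, smul_smul]
      have hTc : T * T * (c : ℂ) = T + T := by
        rw [hT]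
        push_cast
        field_simp
        ring
      rw [hTc, add_smul]
      abel
    have hRmem : R ∈ Matrix.unitaryGroup (Fin d) ℂ := by
      rw [Matrix.mem_unitaryGroup_iff', hRstar, hRR]
    set e : Fin d → ℂ := fun k => (if k = i₀ then (1:ℂ) else 0) with he
    have hvψ : v ⬝ᵥ ψ = ((1 - s : ℝ) : ℂ) := by
      rw [dotProduct]
      have : ∀ k, v k * ψ k = ((vR k * ψr k : ℝ) : ℂ) := by
        intro k; rw [hv, hψ]; push_cast; ring
      rw [Finset.sum_congr rfl fun k _ => this k, ← Complex.ofReal_sum]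
      congr 1
      have h1 : ∑ k, ψr k * (if k = i₀ then (1:ℝ) else 0) = s := by
        simp [mul_ite, Finset.sum_ite_eq', hsdef]
      have : ∀ k : Fin d, vR k * ψr k = ψr k ^ 2 - ψr k * (if k = i₀ then (1:ℝ) else 0) := by
        intro k; rw [hvR]; ring
      rw [Finset.sum_congr rfl fun k _ => this k, Finset.sum_sub_distrib, hψsum, h1]
    have hRψ : R.mulVec ψ = e := by
      rw [hR, Matrix.sub_mulVec, Matrix.one_mulVec, Matrix.smul_mulVec, hM,
        vecMulVec_mulVec, hvψ]
      funext k
      have hT1 : T * ((1 - s : ℝ) : ℂ) = 1 := by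
        rw [hT]
        rw [← Complex.ofReal_mul]
        have h1s : (1:ℝ) - s ≠ 0 := by nlinarith
        rw [show (2 / c) * (1 - s) = 1 by rw [hcdef]; field_simp]
        norm_num
      simp only [Pi.sub_apply, Pi.smul_apply, smul_eq_mul]
      rw [show T * (((1 - s : ℝ) : ℂ) * v k) = (T * ((1 - s : ℝ) : ℂ)) * v k by ring, hT1,
        one_mul]
      simp only [hψ, hv, hvR, he]
      by_cases hk : k = i₀
      · simp only [hk, if_pos rfl]; push_cast; ring
      · simp only [if_neg hk]; push_cast; ring
    have hMsymm : Mᵀ = M := by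
      ext i j
      simp [hM, Matrix.transpose_apply, Matrix.vecMulVec_apply, mul_comm]
    have hRsym : Rᵀ = R := by
      rw [hR, Matrix.transpose_sub, Matrix.transpose_one, Matrix.transpose_smul, hMsymm]
    have hψR : Matrix.vecMul ψ R = e := by
      rw [← hRsym, Matrix.vecMul_transpose]
      exact hRψ
    have hconj : R * ρ * star R = Matrix.vecMulVec e e := by
      rw [hRstar, hρ, mul_vecMulVec, vecMulVec_mul, hRψ, hψR]
    calc pas eps ρ
        ≤ energy (Matrix.diagonal fun i => (eps i : ℂ))
            (((⟨R, hRmem⟩ : Matrix.unitaryGroup (Fin d) ℂ) : Matrix (Fin d) (Fin d) ℂ) * ρ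
              * star ((⟨R, hRmem⟩ : Matrix.unitaryGroup (Fin d) ℂ) : Matrix (Fin d) (Fin d) ℂ)) :=
          pas_le_conj eps hpsd htr ⟨R, hRmem⟩
      _ = eps i₀ := by
          rw [show ((⟨R, hRmem⟩ : Matrix.unitaryGroup (Fin d) ℂ) : Matrix (Fin d) (Fin d) ℂ) = R
            from rfl]
          rw [hconj, energy_eq]
          have hee : ∀ i, ((Matrix.vecMulVec e e) i i).re = if i = i₀ then 1 else 0 := by
            intro i
            rw [Matrix.vecMulVec_apply, he]
            by_cases hi : i = i₀ <;> simp [hi]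
          rw [Finset.sum_congr rfl fun i _ => by rw [hee i]]
          simp [ite_mul, Finset.sum_ite_eq']
      _ = ⨅ j, eps j := hi₀

/-! ### Existence of an admissible state -/

lemma diag_admissible (eps : Fin d → ℝ) (w : Fin d → ℝ) (hw : ∀ k, 0 ≤ w k)
    (hs : ∑ k, w k = 1) :
    (Matrix.diagonal fun k => (w k : ℂ)).PosSemidef
      ∧ (Matrix.diagonal fun k => (w k : ℂ)).trace = 1
      ∧ energy (Matrix.diagonal fun i => (eps i : ℂ)) (Matrix.diagonal fun k => (w k : ℂ))
          = ∑ k, w k * eps k := by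
  refine ⟨Matrix.posSemidef_diagonal_iff.mpr fun k => ?_, ?_, ?_⟩
  · exact_mod_cast Complex.zero_le_real.mpr (hw k)
  · rw [Matrix.trace_diagonal, ← Complex.ofReal_sum]
    exact_mod_cast congrArg Complex.ofReal hs
  · rw [energy_eq]
    refine Finset.sum_congr rfl fun k _ => ?_
    rw [Matrix.diagonal_apply_eq]
    simp

lemma exists_admissible (eps : Fin d → ℝ) (E : ℝ)
    (hE : E ∈ Set.Icc (⨅ i, eps i) (⨆ i, eps i)) :
    ∃ σ : Matrix (Fin d) (Fin d) ℂ, σ.PosSemidef ∧ σ.trace = 1 ∧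
      energy (Matrix.diagonal fun i => (eps i : ℂ)) σ = E := by
  classical
  obtain ⟨i₀, hi₀⟩ := exists_eq_ciInf_of_finite (f := eps)
  obtain ⟨i₁, hi₁⟩ := exists_eq_ciSup_of_finite (f := eps)
  obtain ⟨hE1, hE2⟩ := hE
  rw [← hi₀] at hE1
  rw [← hi₁] at hE2
  by_cases hdeg : eps i₁ = eps i₀
  · have hEeq : E = eps i₀ := le_antisymm (hdeg ▸ hE2) hE1
    set w : Fin d → ℝ := fun k => if k = i₀ then 1 else 0 with hwdef
    obtain ⟨h1, h2, h3⟩ := diag_admissible eps w (fun k => by rw [hwdef]; positivity)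
      (by simp [hwdef, Finset.sum_ite_eq'])
    refine ⟨_, h1, h2, ?_⟩
    rw [h3, hEeq]
    simp [hwdef, ite_mul, Finset.sum_ite_eq']
  · have hlt : eps i₀ < eps i₁ := by
      rcases lt_or_ge (eps i₀) (eps i₁) with h | h
      · exact h
      · exact absurd (le_antisymm (by linarith) (by linarith)) hdeg
    have hne : i₀ ≠ i₁ := fun h => hdeg (by rw [h])
    set t : ℝ := (E - eps i₀) / (eps i₁ - eps i₀) with htdef
    have ht0 : 0 ≤ t := div_nonneg (by linarith) (by linarith)
    have ht1 : t ≤ 1 := by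
      rw [htdef, div_le_one (by linarith)]
      linarith
    set w : Fin d → ℝ :=
      fun k => (1 - t) * (if k = i₀ then 1 else 0) + t * (if k = i₁ then 1 else 0) with hwdef
    have hsum : ∑ k, w k = 1 := by
      simp only [hwdef]
      rw [Finset.sum_add_distrib, ← Finset.mul_sum, ← Finset.mul_sum]
      simp [Finset.sum_ite_eq']
    obtain ⟨h1, h2, h3⟩ := diag_admissible eps w
      (fun k => by
        have h0 : (0:ℝ) ≤ (if k = i₀ then (1:ℝ) else 0) := by positivity
        have h1' : (0:ℝ) ≤ (if k = i₁ then (1:ℝ) else 0) := by positivity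
        simp only [hwdef]
        nlinarith) hsum
    refine ⟨_, h1, h2, ?_⟩
    rw [h3]
    have : ∑ k, w k * eps k = (1 - t) * eps i₀ + t * eps i₁ := by
      simp only [hwdef]
      rw [Finset.sum_congr rfl (fun k _ => by simp only [hwdef]; ring :
        ∀ k ∈ Finset.univ, w k * eps k
          = (1 - t) * ((if k = i₀ then 1 else 0) * eps k)
            + t * ((if k = i₁ then 1 else 0) * eps k))]
      rw [Finset.sum_add_distrib, ← Finset.mul_sum, ← Finset.mul_sum]
      simp [ite_mul, Finset.sum_ite_eq']
    rw [this]
    have : t * (eps i₁ - eps i₀) = E - eps i₀ := by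
      rw [htdef, div_mul_cancel₀]
      linarith
    linarith

/-! ### Dephased state is admissible -/

lemma deph_admissible (eps : Fin d → ℝ) {ρ : Matrix (Fin d) (Fin d) ℂ} {E : ℝ}
    (hρ : ρ.PosSemidef) (ht : ρ.trace = 1)
    (hEn : energy (Matrix.diagonal fun i => (eps i : ℂ)) ρ = E) :
    (Matrix.diagonal fun i => ρ i i).PosSemidef
      ∧ (Matrix.diagonal fun i => ρ i i).trace = 1
      ∧ energy (Matrix.diagonal fun i => (eps i : ℂ)) (Matrix.diagonal fun i => ρ i i) = E := by
  refine ⟨Matrix.posSemidef_diagonal_iff.mpr fun k => ?_, ?_, ?_⟩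
  · rw [diag_entry_eq_re hρ k]
    exact_mod_cast Complex.zero_le_real.mpr (diag_re_nonneg hρ k)
  · rw [Matrix.trace_diagonal, ← ht, Matrix.trace]
    rfl
  · rw [← hEn, energy_eq, energy_eq]
    exact Finset.sum_congr rfl fun k _ => by rw [Matrix.diagonal_apply_eq]

end MaxCohAux

open MaxCohAux in
/-- The maximum coherent ergotropy at fixed mean energy E equals
E - ε_min - E_min(E). -/
theorem max_coherent_ergotropy {d : ℕ} [NeZero d] (eps : Fin d → ℝ) (E : ℝ)
    (hE : E ∈ Set.Icc (⨅ i, eps i) (⨆ i, eps i)) :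
    sSup {x : ℝ | ∃ ρ : Matrix (Fin d) (Fin d) ℂ, ρ.PosSemidef ∧ ρ.trace = 1 ∧
        energy (Matrix.diagonal fun i => (eps i : ℂ)) ρ = E ∧
        x = ergotropy (Matrix.diagonal fun i => (eps i : ℂ)) ρ
          - ergotropy (Matrix.diagonal fun i => (eps i : ℂ))
              (Matrix.diagonal fun i => ρ i i)}
      = E - (⨅ i, eps i) - minErg (Matrix.diagonal fun i => (eps i : ℂ)) E := by
  classical
  set A := {x : ℝ | ∃ ρ : Matrix (Fin d) (Fin d) ℂ, ρ.PosSemidef ∧ ρ.trace = 1 ∧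
        energy (Matrix.diagonal fun i => (eps i : ℂ)) ρ = E ∧
        x = ergotropy (Matrix.diagonal fun i => (eps i : ℂ)) ρ
          - ergotropy (Matrix.diagonal fun i => (eps i : ℂ))
              (Matrix.diagonal fun i => ρ i i)} with hAdef
  set B := {x : ℝ | ∃ ρ : Matrix (Fin d) (Fin d) ℂ,
      ρ.PosSemidef ∧ ρ.trace = 1 ∧
      energy (Matrix.diagonal fun i => (eps i : ℂ)) ρ = E ∧
      ergotropy (Matrix.diagonal fun i => (eps i : ℂ)) ρ = x} with hBdef
  have hgoal : minErg (Matrix.diagonal fun i => (eps i : ℂ)) E = sInf B := rfl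
  rw [hgoal]
  obtain ⟨σ₀, hσ₀, ht₀, hEn₀⟩ := exists_admissible eps E hE
  have hBne : B.Nonempty :=
    ⟨ergotropy (Matrix.diagonal fun i => (eps i : ℂ)) σ₀, σ₀, hσ₀, ht₀, hEn₀, rfl⟩
  have hAne : A.Nonempty :=
    ⟨_, σ₀, hσ₀, ht₀, hEn₀, rfl⟩
  have hBbd : BddBelow B := by
    refine ⟨0, ?_⟩
    rintro y ⟨ρ, h1, h2, h3, rfl⟩
    rw [ergotropy_eq]
    have := pas_le_energy eps h1 h2
    linarith
  have hAbd : BddAbove A := by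
    refine ⟨E - (⨅ i, eps i), ?_⟩
    rintro x ⟨ρ, h1, h2, h3, rfl⟩
    obtain ⟨d1, d2, d3⟩ := deph_admissible eps h1 h2 h3
    rw [ergotropy_eq, ergotropy_eq, h3, d3]
    have hp1 := pas_ge eps h1 h2
    have hp2 := pas_le_energy eps d1 d2
    rw [d3] at hp2
    linarith
  have hup : sSup A ≤ E - (⨅ i, eps i) - sInf B := by
    apply csSup_le hAne
    rintro x ⟨ρ, h1, h2, h3, rfl⟩
    obtain ⟨d1, d2, d3⟩ := deph_admissible eps h1 h2 h3
    have hmem : ergotropy (Matrix.diagonal fun i => (eps i : ℂ))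
        (Matrix.diagonal fun i => ρ i i) ∈ B := ⟨_, d1, d2, d3, rfl⟩
    have h4 := csInf_le hBbd hmem
    have h5 : ergotropy (Matrix.diagonal fun i => (eps i : ℂ)) ρ ≤ E - (⨅ i, eps i) := by
      rw [ergotropy_eq, h3]
      have := pas_ge eps h1 h2
      linarith
    linarith
  have hlow : ∀ y ∈ B, E - (⨅ i, eps i) - sSup A ≤ y := by
    rintro y ⟨σ, h1, h2, h3, rfl⟩
    obtain ⟨ρ, hp1, hp2, hdg, hpas⟩ := pure_state eps h1 h2
    have hEn : energy (Matrix.diagonal fun i => (eps i : ℂ)) ρ = E := by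
      rw [energy_eq, ← h3, energy_eq]
      exact Finset.sum_congr rfl fun i _ => by rw [hdg i]
    have hdd : (Matrix.diagonal fun i => ρ i i) = (Matrix.diagonal fun i => σ i i) := by
      have hfun : (fun i => ρ i i) = (fun i => σ i i) := funext hdg
      rw [hfun]
    have hxmem : ergotropy (Matrix.diagonal fun i => (eps i : ℂ)) ρ
        - ergotropy (Matrix.diagonal fun i => (eps i : ℂ))
            (Matrix.diagonal fun i => ρ i i) ∈ A := ⟨ρ, hp1, hp2, hEn, rfl⟩
    have hle := le_csSup hAbd hxmem
    have e1 : ergotropy (Matrix.diagonal fun i => (eps i : ℂ)) ρ = E - (⨅ i, eps i) := by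
      rw [ergotropy_eq, hEn, hpas]
    obtain ⟨g1, g2, g3⟩ := deph_admissible eps h1 h2 h3
    have e2 : ergotropy (Matrix.diagonal fun i => (eps i : ℂ))
        (Matrix.diagonal fun i => ρ i i)
          ≤ ergotropy (Matrix.diagonal fun i => (eps i : ℂ)) σ := by
      rw [hdd, ergotropy_eq, ergotropy_eq, g3, h3]
      have := pas_le_pas_deph eps h1 h2
      linarith
    linarith
  have hInf : E - (⨅ i, eps i) - sSup A ≤ sInf B := le_csInf hBne hlow
  linarith
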